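/- Duality gap bound (Theorem 1): for the min-max association MILP, p* − d* ≤ (N+1)(ϱ + max_{j∈M} ϱ_j), where ϱ = max_{i∈N, j∈M_i} β_{ij} and ϱ_j = min_{i∈N_j} β_{ij}. In particular, the bound is independent of the number of clients M. -/

import Mathlib

open Finset

/-- Binary feasibility. -/
def feasBin {M N : Type*} [Fintype N] (Nj : M → Finset N) (x : N → M → ℝ) : Prop :=
  (∀ i j, x i j = 0 ∨ x i j = 1) ∧ ∀ j, ∑ i ∈ Nj j, x i j = 1

/-- The maximum AP utilization. -/
def maxLoad {M N : Type*} [Fintype M] [Fintype N] [Nonempty N] [DecidableEq N]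
    (Nj : M → Finset N) (β : N → M → ℝ) (x : N → M → ℝ) : ℝ :=
  Finset.univ.sup' Finset.univ_nonempty
    (fun i => ∑ j ∈ Finset.univ.filter (fun j => i ∈ Nj j), β i j * x i j)

/-- The dual function `g(λ) = ∑_j min_{i ∈ N_j} β i j * λ i`. -/
def dualFun {M N : Type*} [Fintype M] [Fintype N]
    (Nj : M → Finset N) (hNj : ∀ j, (Nj j).Nonempty) (β : N → M → ℝ)
    (lam : N → ℝ) : ℝ :=
  ∑ j, (Nj j).inf' (hNj j) (fun i => β i j * lam i)

/-- Integer load vector of an assignment. -/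
noncomputable def Lv {M N : Type*} [Fintype M] [DecidableEq N]
    (β : N → M → ℝ) (a : M → N) : N → ℝ :=
  fun i => ∑ j, if a j = i then β i j else 0

/-- Support cardinality of a fractional assignment. -/
noncomputable def suppCard {M N : Type*} [Fintype M] [Fintype N]
    (x : N → M → ℝ) : ℕ :=
  ((univ : Finset (N × M)).filter fun p => x p.1 p.2 ≠ 0).card

lemma suppCard_eq_sum {M N : Type*} [Fintype M] [Fintype N]
    (x : N → M → ℝ) :
    suppCard x = ∑ j, ((univ : Finset N).filter fun i => x i j ≠ 0).card := by
  classical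
  rw [suppCard, Finset.card_eq_sum_card_fiberwise (f := Prod.snd) (t := univ)
    (fun p _ => mem_univ _)]
  refine Finset.sum_congr rfl fun j _ => ?_
  refine Finset.card_bij' (fun p _ => p.1) (fun i _ => (i, j)) ?_ ?_ ?_ ?_
  · intro p hp
    simp only [mem_filter, mem_univ, true_and] at hp ⊢
    obtain ⟨h1, h2⟩ := hp
    exact h2 ▸ h1
  · intro i hi
    simp only [mem_filter, mem_univ, true_and] at hi ⊢
    exact ⟨hi, trivial⟩
  · intro p hp
    simp only [mem_filter, mem_univ, true_and] at hp
    exact Prod.ext rfl hp.2.symm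
  · intro i _; rfl

lemma round_lemma {M N : Type*} [Fintype M] [Fintype N] [Nonempty M] [Nonempty N]
    [DecidableEq N]
    (Nj : M → Finset N) (hNj : ∀ j, (Nj j).Nonempty) (β : N → M → ℝ)
    (hβ : ∀ i j, 0 < β i j ∧ β i j ≤ 1)
    (R : ℝ) (hR : ∀ j, (Nj j).inf' (hNj j) (fun i => β i j) ≤ R)
    (t : ℝ) :
    ∀ n (x : N → M → ℝ), suppCard x ≤ n →
      (∀ i j, 0 ≤ x i j) → (∀ i j, i ∉ Nj j → x i j = 0) →
      (∀ j, ∑ i, x i j = 1) → (∀ i, ∑ j, β i j * x i j ≤ t) →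
      ∃ a : M → N, (∀ j, a j ∈ Nj j) ∧
        ∀ i, Lv β a i ≤ t + (Fintype.card N : ℝ) * R := by
  have hR0 : 0 ≤ R := by
    obtain ⟨j⟩ := ‹Nonempty M›
    obtain ⟨i, hi, he⟩ := Finset.exists_mem_eq_inf' (hNj j) (fun i => β i j)
    have h1 := (hβ i j).1
    have h2 := hR j
    rw [he] at h2
    linarith
  intro n
  induction n using Nat.strong_induction_on with
  | _ n IH =>
  intro x hsupp hx0 hxn hx1 hload
  classical
  by_cases hc : suppCard x ≤ Fintype.card N + Fintype.card M
  · -- enough sparsity: round directly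
    set s : M → Finset N := fun j => (univ : Finset N).filter fun i => x i j ≠ 0 with hs
    have hs1 : ∀ j, (s j).Nonempty := by
      intro j
      rw [hs, Finset.filter_nonempty_iff]
      by_contra h
      push_neg at h
      have : ∑ i, x i j = 0 := Finset.sum_eq_zero fun i hi => h i (mem_univ i) |>.symm ▸ rfl
      rw [hx1 j] at this; norm_num at this
    have hsub : ∀ j, s j ⊆ Nj j := by
      intro j i hi
      rw [hs, mem_filter] at hi
      by_contra hni
      exact hi.2 (hxn i j hni)
    have hcards : ∑ j, (s j).card ≤ Fintype.card N + Fintype.card M := by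
      rw [← suppCard_eq_sum]; exact hc
    have e1 : ∀ j, 1 ≤ (s j).card := fun j => Finset.card_pos.2 (hs1 j)
    have e2 : ∑ j, ((s j).card - 1) + Fintype.card M = ∑ j, (s j).card := by
      have h4 : ∑ j : M, ((s j).card - 1 + 1) = ∑ j, (s j).card :=
        Finset.sum_congr rfl fun j _ => Nat.sub_add_cancel (e1 j)
      rw [← h4, Finset.sum_add_distrib]
      simp [Finset.card_univ]
    have hB : ((univ : Finset M).filter fun j => 2 ≤ (s j).card).card
        ≤ Fintype.card N := by
      have h3 : ∑ j, ((s j).card - 1) ≤ Fintype.card N := by omega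
      calc ((univ : Finset M).filter fun j => 2 ≤ (s j).card).card
          = ∑ j ∈ (univ : Finset M).filter (fun j => 2 ≤ (s j).card), 1 := by simp
        _ ≤ ∑ j ∈ (univ : Finset M).filter (fun j => 2 ≤ (s j).card),
              ((s j).card - 1) :=
            Finset.sum_le_sum fun j hj => by
              have := (Finset.mem_filter.1 hj).2; omega
        _ ≤ ∑ j, ((s j).card - 1) :=
            Finset.sum_le_sum_of_subset (Finset.subset_univ _)
        _ ≤ Fintype.card N := h3
    have hm : ∀ j, ∃ i ∈ Nj j, (Nj j).inf' (hNj j) (fun i => β i j) = β i j :=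
      fun j => Finset.exists_mem_eq_inf' (hNj j) _
    choose m hm1 hm2 using hm
    have hone : ∀ j, ¬(2 ≤ (s j).card) → x ((hs1 j).choose) j = 1 := by
      intro j hj
      have hcard1 : (s j).card ≤ 1 := by have := e1 j; omega
      have huniq := Finset.card_le_one.1 hcard1
      have hsum : ∑ i, x i j = x ((hs1 j).choose) j := by
        refine Finset.sum_eq_single _ (fun i _ hne => ?_)
          (fun h => absurd (mem_univ _) h)
        by_contra hxi
        have hmem : i ∈ s j := by rw [hs, mem_filter]; exact ⟨mem_univ i, hxi⟩
        exact hne (huniq i hmem _ (hs1 j).choose_spec)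
      rw [← hsum, hx1 j]
    refine ⟨fun j => if 2 ≤ (s j).card then m j else (hs1 j).choose,
      fun j => ?_, fun i => ?_⟩
    · by_cases h2 : 2 ≤ (s j).card
      · simpa [h2] using hm1 j
      · simpa [h2] using hsub j (hs1 j).choose_spec
    · rw [Lv, ← Finset.sum_filter_add_sum_filter_not univ (fun j => 2 ≤ (s j).card)]
      have hpart1 : (∑ j ∈ univ.filter (fun j => 2 ≤ (s j).card),
          if (if 2 ≤ (s j).card then m j else (hs1 j).choose) = i then β i j else 0)
          ≤ (Fintype.card N : ℝ) * R := by
        calc (∑ j ∈ univ.filter (fun j => 2 ≤ (s j).card),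
            if (if 2 ≤ (s j).card then m j else (hs1 j).choose) = i then β i j else 0)
            ≤ ∑ j ∈ univ.filter (fun j => 2 ≤ (s j).card), R := by
              refine Finset.sum_le_sum fun j hj => ?_
              have h2 := (Finset.mem_filter.1 hj).2
              rw [if_pos h2]
              split
              · rename_i hij
                rw [← hij, ← hm2 j]
                exact hR j
              · exact hR0
          _ = (((univ : Finset M).filter fun j => 2 ≤ (s j).card).card : ℝ) * R := by
              rw [Finset.sum_const, nsmul_eq_mul]
          _ ≤ (Fintype.card N : ℝ) * R :=
              mul_le_mul_of_nonneg_right (Nat.cast_le.2 hB) hR0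
      have hpart2 : (∑ j ∈ univ.filter (fun j => ¬ 2 ≤ (s j).card),
          if (if 2 ≤ (s j).card then m j else (hs1 j).choose) = i then β i j else 0)
          ≤ t := by
        calc (∑ j ∈ univ.filter (fun j => ¬ 2 ≤ (s j).card),
            if (if 2 ≤ (s j).card then m j else (hs1 j).choose) = i then β i j else 0)
            ≤ ∑ j ∈ univ.filter (fun j => ¬ 2 ≤ (s j).card), β i j * x i j := by
              refine Finset.sum_le_sum fun j hj => ?_
              have h2 := (Finset.mem_filter.1 hj).2
              rw [if_neg h2]
              split
              · rename_i hij
                rw [← hij, hone j h2, mul_one]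
              · exact mul_nonneg (hβ i j).1.le (hx0 i j)
          _ ≤ ∑ j, β i j * x i j :=
              Finset.sum_le_sum_of_subset_of_nonneg (Finset.filter_subset _ _)
                (fun j _ _ => mul_nonneg (hβ i j).1.le (hx0 i j))
          _ ≤ t := hload i
      linarith
  · -- too many nonzeros: find a direction and shrink the support
    push_neg at hc
    haveI : DecidableEq M := Classical.decEq M
    suffices key : ∀ η : N → M → ℝ, (∀ i j, η i j ≠ 0 → x i j ≠ 0) →
        (∀ j0, ∑ i, η i j0 = 0) → (∀ i0, ∑ j, η i0 j * β i0 j = 0) →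
        (∃ q : N × M, 0 < η q.1 q.2) →
        ∃ a : M → N, (∀ j, a j ∈ Nj j) ∧
          ∀ i, Lv β a i ≤ t + (Fintype.card N : ℝ) * R by
      -- produce such an η from linear dependence
      set T : Finset (N × M) :=
        (univ : Finset (N × M)).filter (fun p => x p.1 p.2 ≠ 0) with hT
      have hTcard : T.card = suppCard x := rfl
      set v : {p // p ∈ T} → (N → ℝ) × (M → ℝ) :=
        fun p => ((Pi.single p.1.1 (β p.1.1 p.1.2) : N → ℝ),
          (Pi.single p.1.2 (1:ℝ) : M → ℝ)) with hv
      have hdep : ¬ LinearIndependent ℝ v := by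
        intro hli
        have hle := hli.fintype_card_le_finrank
        rw [Fintype.card_coe, Module.finrank_prod, Module.finrank_pi,
          Module.finrank_pi, hTcard] at hle
        omega
      obtain ⟨g, hg0, p0, hgp0⟩ := Fintype.not_linearIndependent_iff.1 hdep
      set η : N → M → ℝ :=
        fun i j => if h : (i, j) ∈ T then g ⟨(i, j), h⟩ else 0 with hη
      have hgη : ∀ p : {p // p ∈ T}, η p.1.1 p.1.2 = g p := by
        rintro ⟨⟨i, j⟩, hp⟩
        simp only [hη]
        rw [dif_pos hp]
      have hηsupp : ∀ i j, η i j ≠ 0 → x i j ≠ 0 := by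
        intro i j h
        simp only [hη] at h
        by_contra hx
        rw [dif_neg (by simp [hT, hx])] at h
        exact h rfl
      have hcoll : ∀ F : N × M → ℝ, (∀ q, q ∉ T → F q = 0) →
          ∑ p : {p // p ∈ T}, F p.1 = ∑ i, ∑ j, F (i, j) := by
        intro F hF
        rw [Finset.sum_coe_sort T F, Finset.sum_subset (Finset.subset_univ T)
          (fun q _ hq => hF q hq)]
        exact Fintype.sum_prod_type F
      have hFzero : ∀ q : N × M, q ∉ T → η q.1 q.2 = 0 := by
        intro q hq
        simp only [hη]
        rw [dif_neg (by simpa using hq)]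
      have hrow : ∀ j0, ∑ i, η i j0 = 0 := by
        intro j0
        have h1 := congrArg (fun z : (N → ℝ) × (M → ℝ) => z.2 j0) hg0
        simp only [Prod.snd_sum, Finset.sum_apply, Prod.smul_snd, Pi.smul_apply,
          smul_eq_mul, Prod.snd_zero, Pi.zero_apply, hv] at h1
        have h3 := hcoll (fun q => η q.1 q.2 * (Pi.single q.2 (1:ℝ) : M → ℝ) j0)
          (fun q hq => by have := hFzero q hq; simp [this])
        have h4 : ∑ p : {p // p ∈ T},
            η p.1.1 p.1.2 * (Pi.single (p.1.2) (1:ℝ) : M → ℝ) j0 = 0 := by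
          rw [← h1]
          exact Finset.sum_congr rfl fun p _ => by rw [hgη p]
        have h2 : ∑ i, ∑ j, η i j * (Pi.single j (1:ℝ) : M → ℝ) j0 = 0 :=
          h3.symm.trans h4
        simpa [Pi.single_apply, mul_ite, Finset.sum_ite_eq] using h2
      have hcol : ∀ i0, ∑ j, η i0 j * β i0 j = 0 := by
        intro i0
        have h1 := congrArg (fun z : (N → ℝ) × (M → ℝ) => z.1 i0) hg0
        simp only [Prod.fst_sum, Finset.sum_apply, Prod.smul_fst, Pi.smul_apply,
          smul_eq_mul, Prod.fst_zero, Pi.zero_apply, hv] at h1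
        have h3 := hcoll (fun q => η q.1 q.2 * (Pi.single q.1 (β q.1 q.2) : N → ℝ) i0)
          (fun q hq => by have := hFzero q hq; simp [this])
        have h4 : ∑ p : {p // p ∈ T},
            η p.1.1 p.1.2 * (Pi.single (p.1.1) (β p.1.1 p.1.2) : N → ℝ) i0 = 0 := by
          rw [← h1]
          exact Finset.sum_congr rfl fun p _ => by rw [hgη p]
        have h2 : ∑ i, ∑ j, η i j * (Pi.single i (β i j) : N → ℝ) i0 = 0 :=
          h3.symm.trans h4
        rw [Finset.sum_comm] at h2
        simpa [Pi.single_apply, mul_ite, Finset.sum_ite_eq] using h2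
      have hne0 : η p0.1.1 p0.1.2 ≠ 0 := by rw [hgη p0]; exact hgp0
      rcases lt_or_gt_of_ne hne0 with hlt | hgt
      · exact key (fun i j => -η i j)
          (fun i j h => hηsupp i j (by simpa using h))
          (fun j0 => by simp [Finset.sum_neg_distrib, hrow j0])
          (fun i0 => by
            have := hcol i0
            simp only [neg_mul]
            rw [Finset.sum_neg_distrib, this, neg_zero])
          ⟨p0.1, by simpa using hlt⟩
      · exact key η hηsupp hrow hcol ⟨p0.1, hgt⟩
    intro η hηsupp hrow hcol ⟨q0, hq0⟩
    have hPne : ((univ : Finset (N × M)).filter fun q => 0 < η q.1 q.2).Nonempty :=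
      ⟨q0, by simp [hq0]⟩
    set τ : ℝ := ((univ : Finset (N × M)).filter fun q => 0 < η q.1 q.2).inf' hPne
      (fun q => x q.1 q.2 / η q.1 q.2) with hτ
    have hxpos : ∀ q : N × M, 0 < η q.1 q.2 → 0 < x q.1 q.2 := fun q hq =>
      lt_of_le_of_ne (hx0 _ _) (Ne.symm (hηsupp _ _ (ne_of_gt hq)))
    have hτpos : 0 < τ := by
      rw [hτ, Finset.lt_inf'_iff]
      intro q hqmem
      have hq := (Finset.mem_filter.1 hqmem).2
      exact div_pos (hxpos q hq) hq
    obtain ⟨q1, hq1P, hq1min⟩ := Finset.exists_mem_eq_inf' hPne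
      (fun q => x q.1 q.2 / η q.1 q.2)
    have hq1pos := (Finset.mem_filter.1 hq1P).2
    set x' : N → M → ℝ := fun i j => x i j - τ * η i j with hx'
    have hτle : ∀ i j, 0 < η i j → τ * η i j ≤ x i j := by
      intro i j hij
      have h1 : τ ≤ x i j / η i j := by
        rw [hτ]
        exact Finset.inf'_le _ (Finset.mem_filter.2 ⟨mem_univ (i, j), hij⟩)
      rw [le_div_iff₀ hij] at h1
      linarith
    have hx'0 : ∀ i j, 0 ≤ x' i j := by
      intro i j
      rcases le_or_gt (η i j) 0 with h | h
      · have : τ * η i j ≤ 0 := mul_nonpos_of_nonneg_of_nonpos hτpos.le h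
        have := hx0 i j
        simp only [hx']
        linarith
      · have := hτle i j h
        simp only [hx']
        linarith
    have hηzero : ∀ i j, x i j = 0 → η i j = 0 := by
      intro i j h
      by_contra hne
      exact hηsupp i j hne h
    have hx'n : ∀ i j, i ∉ Nj j → x' i j = 0 := by
      intro i j h
      have h1 := hxn i j h
      have h2 := hηzero i j h1
      simp [hx', h1, h2]
    have hx'1 : ∀ j, ∑ i, x' i j = 1 := by
      intro j
      simp only [hx']
      rw [Finset.sum_sub_distrib, hx1 j, ← Finset.mul_sum, hrow j, mul_zero, sub_zero]
    have hx'load : ∀ i, ∑ j, β i j * x' i j ≤ t := by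
      intro i
      have he : ∑ j, β i j * x' i j = ∑ j, β i j * x i j - τ * ∑ j, η i j * β i j := by
        rw [Finset.mul_sum, ← Finset.sum_sub_distrib]
        refine Finset.sum_congr rfl fun j _ => ?_
        simp only [hx']
        ring
      rw [he, hcol i, mul_zero, sub_zero]
      exact hload i
    have hx'q1 : x' q1.1 q1.2 = 0 := by
      simp only [hx', hτ]
      rw [← hτ, show τ = x q1.1 q1.2 / η q1.1 q1.2 from hq1min]
      field_simp; ring
    have hsupp' : suppCard x' < suppCard x := by
      have hsub' : ((univ : Finset (N × M)).filter fun p => x' p.1 p.2 ≠ 0)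
          ⊆ ((univ : Finset (N × M)).filter fun p => x p.1 p.2 ≠ 0).erase q1 := by
        intro q hq
        rw [Finset.mem_filter] at hq
        rw [Finset.mem_erase, Finset.mem_filter]
        refine ⟨?_, mem_univ q, ?_⟩
        · rintro rfl
          exact hq.2 hx'q1
        · intro hxq
          apply hq.2
          simp [hx', hxq, hηzero q.1 q.2 hxq]
      calc suppCard x' ≤ (((univ : Finset (N × M)).filter
            fun p => x p.1 p.2 ≠ 0).erase q1).card := Finset.card_le_card hsub'
        _ < suppCard x := Finset.card_erase_lt_of_mem
            (Finset.mem_filter.2 ⟨mem_univ q1, hηsupp _ _ (ne_of_gt hq1pos)⟩)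
    exact IH (suppCard x') (lt_of_lt_of_le hsupp' hsupp) x' le_rfl hx'0 hx'n hx'1 hx'load

lemma dual_ge_lp {M N : Type*} [Fintype M] [Fintype N] [Nonempty M] [Nonempty N]
    [DecidableEq N]
    (Nj : M → Finset N) (hNj : ∀ j, (Nj j).Nonempty) (β : N → M → ℝ)
    (v : ℝ)
    (hv : ∀ x : N → M → ℝ, (∀ i j, 0 ≤ x i j) → (∀ i j, i ∉ Nj j → x i j = 0) →
      (∀ j, ∑ i, x i j = 1) → ∃ i, v ≤ ∑ j, β i j * x i j) :
    ∃ lam ∈ stdSimplex ℝ N, v ≤ dualFun Nj hNj β lam := by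
  classical
  set Z : Set (N → ℝ) := {z | ∃ x : N → M → ℝ, (∀ i j, 0 ≤ x i j) ∧
    (∀ i j, i ∉ Nj j → x i j = 0) ∧ (∀ j, ∑ i, x i j = 1) ∧
    z = fun i => ∑ j, β i j * x i j} with hZ
  set U : Set (N → ℝ) := {w | ∀ i, w i < v} with hU
  have hUi : U = ⋂ i, {w : N → ℝ | w i < v} := by
    ext w; simp [hU, Set.mem_iInter]
  have hUconv : Convex ℝ U := by
    rw [hUi]
    exact convex_iInter fun i =>
      convex_halfSpace_lt ⟨fun a b => rfl, fun c a => rfl⟩ v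
  have hUopen : IsOpen U := by
    rw [hUi]
    exact isOpen_iInter_of_finite fun i =>
      isOpen_lt (continuous_apply i) continuous_const
  have hZconv : Convex ℝ Z := by
    rintro z1 ⟨x1, h10, h1n, h11, rfl⟩ z2 ⟨x2, h20, h2n, h21, rfl⟩ a b ha hb hab
    refine ⟨fun i j => a * x1 i j + b * x2 i j, ?_, ?_, ?_, ?_⟩
    · intro i j
      exact add_nonneg (mul_nonneg ha (h10 i j)) (mul_nonneg hb (h20 i j))
    · intro i j h
      simp [h1n i j h, h2n i j h]
    · intro j
      rw [Finset.sum_add_distrib, ← Finset.mul_sum, ← Finset.mul_sum, h11 j, h21 j]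
      simpa using hab
    · funext i
      simp only [Pi.add_apply, Pi.smul_apply, smul_eq_mul]
      rw [Finset.mul_sum, Finset.mul_sum, ← Finset.sum_add_distrib]
      exact Finset.sum_congr rfl fun j _ => by ring
  have hdisj : Disjoint U Z := by
    rw [Set.disjoint_left]
    rintro w hw ⟨x, h0, hn, h1, rfl⟩
    obtain ⟨i, hi⟩ := hv x h0 hn h1
    exact absurd hi (not_le.2 (hw i))
  obtain ⟨f, u, hfu, hfz⟩ := geometric_hahn_banach_open hUconv hUopen hZconv hdisj
  set lam0 : N → ℝ := fun i => f (fun j => if i = j then 1 else 0) with hlam0def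
  have hrep : ∀ w : N → ℝ, f w = ∑ i, w i * lam0 i := by
    intro w
    have h := LinearMap.pi_apply_eq_sum_univ
      (f.toLinearMap : (N → ℝ) →ₗ[ℝ] ℝ) w
    simpa [smul_eq_mul, hlam0def] using h
  have hconst : ∀ c : ℝ, f (fun _ => c) = c * ∑ i, lam0 i := by
    intro c
    rw [hrep, Finset.mul_sum]
  have hmemU : ∀ c : ℝ, c < v → (fun _ : N => c) ∈ U := by
    intro c hc
    rw [hU]; intro i; exact hc
  have hcu : f (fun _ => v - 1) < u := hfu _ (hmemU _ (by linarith))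
  have hlam0 : ∀ i, 0 ≤ lam0 i := by
    intro i0
    by_contra hneg
    push_neg at hneg
    set c : ℝ := v - 1 with hc
    set tt : ℝ := (u - f (fun _ => c)) / (-lam0 i0) with htt
    have httpos : 0 < tt := div_pos (by linarith) (by linarith)
    set w : N → ℝ := fun j => c + (-tt) * (if i0 = j then 1 else 0) with hw
    have hwU : w ∈ U := by
      rw [hU]
      intro i
      simp only [hw]
      by_cases hii : i0 = i
      · rw [if_pos hii]; nlinarith
      · rw [if_neg hii]; simp; linarith
    have hfw : f w = u := by
      rw [hrep]
      have : ∀ j, w j * lam0 j = c * lam0 j + (-tt) * ((if i0 = j then 1 else 0) * lam0 j) := by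
        intro j; rw [hw]; ring
      rw [Finset.sum_congr rfl fun j _ => this j, Finset.sum_add_distrib,
        ← Finset.mul_sum, ← Finset.mul_sum]
      have h2 : ∑ j, (if i0 = j then (1:ℝ) else 0) * lam0 j = lam0 i0 := by
        simp [ite_mul, Finset.sum_ite_eq]
      rw [h2, ← hconst c, htt]
      have hne : lam0 i0 ≠ 0 := ne_of_lt hneg
      have hne' : -lam0 i0 ≠ 0 := neg_ne_zero.2 hne
      field_simp [hne']
      ring
    have hlt := hfu w hwU
    rw [hfw] at hlt
    exact lt_irrefl u hlt
  -- Z is nonempty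
  have hZne : ∃ z, z ∈ Z := by
    refine ⟨_, ⟨fun i j => if (hNj j).choose = i then (1:ℝ) else 0, ?_, ?_, ?_, rfl⟩⟩
    · intro i j; by_cases h : (hNj j).choose = i <;> simp [h]
    · intro i j h
      have hne : (hNj j).choose ≠ i := fun he => h (he ▸ (hNj j).choose_spec)
      simp [hne]
    · intro j
      simp [Finset.sum_ite_eq]
  have hσ : 0 < ∑ i, lam0 i := by
    rcases (Finset.sum_nonneg fun i _ => hlam0 i).lt_or_eq with h | h
    · exact h
    · exfalso
      have hall : ∀ i, lam0 i = 0 := by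
        have := (Finset.sum_eq_zero_iff_of_nonneg fun i _ => hlam0 i).1 h.symm
        exact fun i => this i (mem_univ i)
      have hf0 : ∀ w, f w = 0 := by
        intro w; rw [hrep]; simp [hall]
      obtain ⟨z, hz⟩ := hZne
      have h1 := hfz z hz
      have h2 := hfu _ (hmemU (v - 1) (by linarith))
      rw [hf0] at h1 h2
      linarith
  have huv : v * (∑ i, lam0 i) ≤ u := by
    by_contra h
    push_neg at h
    set tt : ℝ := (v * (∑ i, lam0 i) - u) / (∑ i, lam0 i) with htt
    have httpos : 0 < tt := div_pos (by linarith) hσ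
    have hmem : (fun _ : N => v - tt) ∈ U := hmemU _ (by linarith)
    have h1 := hfu _ hmem
    rw [hconst] at h1
    have hσne : (∑ i, lam0 i) ≠ 0 := ne_of_gt hσ
    have h2 : (v - tt) * (∑ i, lam0 i) = u := by
      rw [htt]; field_simp; ring
    rw [h2] at h1
    exact lt_irrefl u h1
  refine ⟨fun i => lam0 i / (∑ i, lam0 i), ⟨fun i => div_nonneg (hlam0 i) hσ.le, ?_⟩, ?_⟩
  · rw [← Finset.sum_div, div_self (ne_of_gt hσ)]
  · -- the dual value is at least v
    have hm : ∀ j, ∃ i ∈ Nj j, (Nj j).inf' (hNj j)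
        (fun i => β i j * (lam0 i / (∑ i, lam0 i))) = β i j * (lam0 i / (∑ i, lam0 i)) :=
      fun j => Finset.exists_mem_eq_inf' (hNj j) _
    choose m hm1 hm2 using hm
    have hzmem : (fun i => ∑ j, β i j * (if m j = i then (1:ℝ) else 0)) ∈ Z := by
      refine ⟨fun i j => if m j = i then (1:ℝ) else 0, ?_, ?_, ?_, rfl⟩
      · intro i j; by_cases h : m j = i <;> simp [h]
      · intro i j h
        have hne : m j ≠ i := fun he => h (he ▸ hm1 j)
        simp [hne]
      · intro j
        simp [Finset.sum_ite_eq]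
    have hzval : f (fun i => ∑ j, β i j * (if m j = i then (1:ℝ) else 0))
        = ∑ j, β (m j) j * lam0 (m j) := by
      rw [hrep]
      have h1 : ∀ i, (∑ j, β i j * (if m j = i then (1:ℝ) else 0)) * lam0 i
          = ∑ j, (if m j = i then β i j * lam0 i else 0) := by
        intro i
        rw [Finset.sum_mul]
        exact Finset.sum_congr rfl fun j _ => by split <;> simp <;> ring
      rw [Finset.sum_congr rfl fun i _ => h1 i, Finset.sum_comm]
      exact Finset.sum_congr rfl fun j _ => by simp [Finset.sum_ite_eq]
    have hge := hfz _ hzmem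
    rw [hzval] at hge
    have hdual : dualFun Nj hNj β (fun i => lam0 i / (∑ i, lam0 i))
        = (∑ j, β (m j) j * lam0 (m j)) / (∑ i, lam0 i) := by
      rw [dualFun, Finset.sum_div]
      refine Finset.sum_congr rfl fun j _ => ?_
      rw [hm2 j]
      field_simp
    rw [hdual, le_div_iff₀ hσ]
    calc v * (∑ i, lam0 i) ≤ u := huv
      _ ≤ ∑ j, β (m j) j * lam0 (m j) := hge

/-- Duality gap bound (Theorem 1): `p* − d* ≤ (N+1)(ϱ + max_j ϱ_j)` with
`ϱ = max_{i,j} β i j` and `ϱ_j = min_{i ∈ N_j} β i j`; the bound does not depend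
on the number of clients. -/
theorem stmt_18 {M N : Type*} [Fintype M] [Fintype N] [Nonempty M] [Nonempty N]
    [DecidableEq N]
    (Nj : M → Finset N) (hNj : ∀ j, (Nj j).Nonempty)
    (β : N → M → ℝ) (hβ : ∀ i j, 0 < β i j ∧ β i j ≤ 1) :
    sInf {p : ℝ | ∃ x : N → M → ℝ, feasBin Nj x ∧ p = maxLoad Nj β x} -
        sSup {d : ℝ | ∃ lam ∈ stdSimplex ℝ N, d = dualFun Nj hNj β lam} ≤
      ((Fintype.card N : ℝ) + 1) *
        (Finset.univ.sup' Finset.univ_nonempty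
            (fun j => (Nj j).sup' (hNj j) (fun i => β i j)) +
          Finset.univ.sup' Finset.univ_nonempty
            (fun j => (Nj j).inf' (hNj j) (fun i => β i j))) := by
  classical
  obtain ⟨j0⟩ := ‹Nonempty M›
  set P : ℝ := Finset.univ.sup' Finset.univ_nonempty
      (fun j => (Nj j).inf' (hNj j) (fun i => β i j)) with hPdef
  set Q : ℝ := Finset.univ.sup' Finset.univ_nonempty
      (fun j => (Nj j).sup' (hNj j) (fun i => β i j)) with hQdef
  have hP0 : 0 ≤ P := by
    obtain ⟨i, hi, he⟩ := Finset.exists_mem_eq_inf' (hNj j0) (fun i => β i j0)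
    have h1 : (Nj j0).inf' (hNj j0) (fun i => β i j0) ≤ P :=
      Finset.le_sup' (fun j => (Nj j).inf' (hNj j) (fun i => β i j)) (mem_univ j0)
    rw [he] at h1
    linarith [(hβ i j0).1]
  have hQ0 : 0 ≤ Q := by
    obtain ⟨i, hi⟩ := hNj j0
    have h1 : β i j0 ≤ (Nj j0).sup' (hNj j0) (fun i => β i j0) :=
      Finset.le_sup' (fun i => β i j0) hi
    have h2 : (Nj j0).sup' (hNj j0) (fun i => β i j0) ≤ Q :=
      Finset.le_sup' (fun j => (Nj j).sup' (hNj j) (fun i => β i j)) (mem_univ j0)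
    linarith [(hβ i j0).1]
  set SL : Set ℝ := {r | ∃ x : N → M → ℝ, (∀ i j, 0 ≤ x i j) ∧
    (∀ i j, i ∉ Nj j → x i j = 0) ∧ (∀ j, ∑ i, x i j = 1) ∧
    r = Finset.univ.sup' Finset.univ_nonempty (fun i => ∑ j, β i j * x i j)}
    with hSLdef
  have hSLne : SL.Nonempty := by
    refine ⟨_, fun i j => if (hNj j).choose = i then (1:ℝ) else 0, ?_, ?_, ?_, rfl⟩
    · intro i j; by_cases h : (hNj j).choose = i <;> simp [h]
    · intro i j h
      have hne : (hNj j).choose ≠ i := fun he => h (he ▸ (hNj j).choose_spec)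
      simp [hne]
    · intro j
      simp [Finset.sum_ite_eq]
  have hSLbdd : BddBelow SL := by
    refine ⟨0, ?_⟩
    rintro r ⟨x, h0, hn, h1, rfl⟩
    obtain ⟨i⟩ := ‹Nonempty N›
    have hnn : (0:ℝ) ≤ ∑ j, β i j * x i j :=
      Finset.sum_nonneg fun j _ => mul_nonneg (hβ i j).1.le (h0 i j)
    exact hnn.trans (Finset.le_sup' (fun i => ∑ j, β i j * x i j) (mem_univ i))
  set v : ℝ := sInf SL with hvdef
  have hlow : ∀ x : N → M → ℝ, (∀ i j, 0 ≤ x i j) →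
      (∀ i j, i ∉ Nj j → x i j = 0) → (∀ j, ∑ i, x i j = 1) →
      ∃ i, v ≤ ∑ j, β i j * x i j := by
    intro x h0 hn h1
    have hmem : Finset.univ.sup' Finset.univ_nonempty
        (fun i => ∑ j, β i j * x i j) ∈ SL := ⟨x, h0, hn, h1, rfl⟩
    obtain ⟨i, _, he⟩ := Finset.exists_mem_eq_sup'
      (Finset.univ_nonempty : (Finset.univ : Finset N).Nonempty)
      (fun i => ∑ j, β i j * x i j)
    exact ⟨i, by rw [← he]; exact csInf_le hSLbdd hmem⟩
  obtain ⟨lam, hlam, hdv⟩ := dual_ge_lp Nj hNj β v hlow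
  have hbddS2 : BddAbove {d : ℝ | ∃ lam ∈ stdSimplex ℝ N,
      d = dualFun Nj hNj β lam} := by
    refine ⟨(Fintype.card M : ℝ), ?_⟩
    rintro d ⟨mu, hmu, rfl⟩
    rw [dualFun]
    have hstep : ∀ j : M, (Nj j).inf' (hNj j) (fun i => β i j * mu i) ≤ 1 := by
      intro j
      have h1 : (Nj j).inf' (hNj j) (fun i => β i j * mu i)
          ≤ β ((hNj j).choose) j * mu ((hNj j).choose) :=
        Finset.inf'_le _ (hNj j).choose_spec
      have h2 : mu ((hNj j).choose) ≤ 1 := by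
        rw [← hmu.2]
        exact Finset.single_le_sum (fun i _ => hmu.1 i) (mem_univ _)
      nlinarith [(hβ ((hNj j).choose) j).1, (hβ ((hNj j).choose) j).2,
        hmu.1 ((hNj j).choose)]
    have hsum : (∑ j, (Nj j).inf' (hNj j) (fun i => β i j * mu i))
        ≤ ∑ _j : M, (1:ℝ) := Finset.sum_le_sum fun j _ => hstep j
    simpa using hsum
  have hd : v ≤ sSup {d : ℝ | ∃ lam ∈ stdSimplex ℝ N, d = dualFun Nj hNj β lam} :=
    hdv.trans (le_csSup hbddS2 ⟨lam, hlam, rfl⟩)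
  have hbddS1 : BddBelow {p : ℝ | ∃ x : N → M → ℝ,
      feasBin Nj x ∧ p = maxLoad Nj β x} := by
    refine ⟨0, ?_⟩
    rintro p ⟨x, hx, rfl⟩
    obtain ⟨i⟩ := ‹Nonempty N›
    rw [maxLoad]
    refine le_trans ?_ (Finset.le_sup' _ (mem_univ i))
    refine Finset.sum_nonneg fun j _ => ?_
    rcases hx.1 i j with h | h <;> rw [h] <;> nlinarith [(hβ i j).1]
  have hup : ∀ ε : ℝ, 0 < ε →
      sInf {p : ℝ | ∃ x : N → M → ℝ, feasBin Nj x ∧ p = maxLoad Nj β x}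
        ≤ v + ε + (Fintype.card N : ℝ) * P := by
    intro ε hε
    obtain ⟨r, hrSL, hrlt⟩ := Real.lt_sInf_add_pos hSLne hε
    rw [← hvdef] at hrlt
    obtain ⟨x, h0, hn, h1, rfl⟩ := hrSL
    have hload : ∀ i, ∑ j, β i j * x i j ≤ v + ε := fun i =>
      (Finset.le_sup' (fun i => ∑ j, β i j * x i j) (mem_univ i)).trans hrlt.le
    obtain ⟨a, haNj, hLa⟩ := round_lemma Nj hNj β hβ P
      (fun j => Finset.le_sup' (fun j => (Nj j).inf' (hNj j) (fun i => β i j))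
        (mem_univ j))
      (v + ε) (suppCard x) x le_rfl h0 hn h1 hload
    have hfeas : feasBin Nj (fun i j => if a j = i then (1:ℝ) else 0) := by
      constructor
      · intro i j; by_cases h : a j = i <;> simp [h]
      · intro j
        rw [Finset.sum_ite_eq]
        simp [haNj j]
    have hmem : maxLoad Nj β (fun i j => if a j = i then (1:ℝ) else 0)
        ∈ {p : ℝ | ∃ x : N → M → ℝ, feasBin Nj x ∧ p = maxLoad Nj β x} :=
      ⟨_, hfeas, rfl⟩
    refine (csInf_le hbddS1 hmem).trans ?_
    rw [maxLoad]
    refine Finset.sup'_le _ _ fun i _ => ?_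
    have he : ∑ j ∈ Finset.univ.filter (fun j => i ∈ Nj j),
        β i j * (if a j = i then (1:ℝ) else 0) = Lv β a i := by
      rw [Lv]
      rw [show (fun j => β i j * (if a j = i then (1:ℝ) else 0))
          = fun j => if a j = i then β i j else 0 from
        funext fun j => by by_cases h : a j = i <;> simp [h]]
      refine Finset.sum_subset (Finset.filter_subset _ _) (fun j _ hj => ?_)
      have hni : i ∉ Nj j := by simpa using hj
      rw [if_neg (show ¬ (a j = i) from fun he' => hni (he' ▸ haNj j))]
    rw [he]
    exact hLa i
  have hone : sInf {p : ℝ | ∃ x : N → M → ℝ, feasBin Nj x ∧ p = maxLoad Nj β x}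
      ≤ v + (Fintype.card N : ℝ) * P := by
    refine le_of_forall_pos_le_add fun ε hε => ?_
    linarith [hup ε hε]
  have hNcast : (0:ℝ) ≤ (Fintype.card N : ℝ) := Nat.cast_nonneg _
  nlinarith [hone, hd, hP0, hQ0, hNcast,
    mul_nonneg hNcast hQ0, mul_nonneg hNcast hP0]
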